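/- Let R be a ring, and let A, C be left R-modules with C pure injective. Let f : A → C be a monomorphism such that f^+ : C^+ → A^+ is a precover of A^+ with respect to the class of cotorsion right R-modules. Then f is a pure injective preenvelope of A. -/

import Mathlib

universe u

/-! Common definitions: character modules, purity, pure injectivity. -/

open MulOpposite


/-- The character group `M⁺ = Hom_ℤ(M, ℚ/ℤ)`. -/
def CharMod (M : Type u) [AddCommGroup M] : Type u := M →+ AddCircle (1 : ℚ)

instance (M : Type u) [AddCommGroup M] : AddCommGroup (CharMod M) :=
  inferInstanceAs (AddCommGroup (M →+ AddCircle (1 : ℚ)))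

instance (M : Type u) [AddCommGroup M] : FunLike (CharMod M) M (AddCircle (1 : ℚ)) :=
  inferInstanceAs (FunLike (M →+ AddCircle (1 : ℚ)) M (AddCircle (1 : ℚ)))

instance (M : Type u) [AddCommGroup M] :
    AddMonoidHomClass (CharMod M) M (AddCircle (1 : ℚ)) :=
  inferInstanceAs (AddMonoidHomClass (M →+ AddCircle (1 : ℚ)) M (AddCircle (1 : ℚ)))

/-- If `M` is a left `R`-module, `M⁺` is a right `R`-module via `(c • r) m = c (r • m)`. -/
instance CharMod.moduleOp (R : Type v) [Ring R] (M : Type u) [AddCommGroup M] [Module R M] :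
    Module Rᵐᵒᵖ (CharMod M) where
  smul r c := (c : M →+ AddCircle (1 : ℚ)).comp (DistribMulAction.toAddMonoidHom M r.unop)
  one_smul c := AddMonoidHom.ext fun m => congrArg c (one_smul R m)
  mul_smul r s c := AddMonoidHom.ext fun m => congrArg c (mul_smul s.unop r.unop m)
  smul_zero r := rfl
  smul_add r c d := rfl
  add_smul r s c := AddMonoidHom.ext fun m => by
    show c ((r.unop + s.unop) • m) = c (r.unop • m) + c (s.unop • m)
    rw [add_smul, map_add]
  zero_smul c := AddMonoidHom.ext fun m => by
    show c ((0 : R) • m) = 0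
    rw [zero_smul, map_zero]

@[simp] lemma CharMod.op_smul_apply {R : Type v} [Ring R] {M : Type u} [AddCommGroup M]
    [Module R M] (r : Rᵐᵒᵖ) (c : CharMod M) (m : M) : (r • c) m = c (r.unop • m) := rfl

/-- If `N` is a right `R`-module, `N⁺` is a left `R`-module via `(r • c) n = c (n • r)`. -/
instance CharMod.moduleUnop (R : Type v) [Ring R] (N : Type u) [AddCommGroup N] [Module Rᵐᵒᵖ N] :
    Module R (CharMod N) where
  smul r c := (c : N →+ AddCircle (1 : ℚ)).comp (DistribMulAction.toAddMonoidHom N (op r))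
  one_smul c := AddMonoidHom.ext fun n => congrArg c (one_smul Rᵐᵒᵖ n)
  mul_smul r s c := AddMonoidHom.ext fun n => by
    show c ((op (r * s)) • n) = c (op s • op r • n)
    rw [← mul_smul]; rfl
  smul_zero r := rfl
  smul_add r c d := rfl
  add_smul r s c := AddMonoidHom.ext fun n => by
    show c ((op (r + s)) • n) = c (op r • n) + c (op s • n)
    rw [show op (r + s) = op r + op s from rfl, add_smul, map_add]
  zero_smul c := AddMonoidHom.ext fun n => by
    show c ((op (0 : R)) • n) = 0
    rw [show op (0 : R) = (0 : Rᵐᵒᵖ) from rfl, zero_smul, map_zero]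

@[simp] lemma CharMod.unop_smul_apply {R : Type v} [Ring R] {N : Type u} [AddCommGroup N]
    [Module Rᵐᵒᵖ N] (r : R) (c : CharMod N) (n : N) : (r • c) n = c (op r • n) := rfl

/-- The dual `f⁺ : C⁺ → A⁺` of a map `f : A → C` of left `R`-modules. -/
def charDual {R : Type v} [Ring R] {A C : Type u} [AddCommGroup A] [Module R A]
    [AddCommGroup C] [Module R C] (f : A →ₗ[R] C) : CharMod C →ₗ[Rᵐᵒᵖ] CharMod A where
  toFun c := (c : C →+ AddCircle (1 : ℚ)).comp f.toAddMonoidHom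
  map_add' _ _ := rfl
  map_smul' r c := AddMonoidHom.ext fun a => (congrArg c (f.map_smul r.unop a)).symm

/-- The canonical evaluation map `σ_M : M → M⁺⁺`. -/
def charEval (R : Type v) [Ring R] (M : Type u) [AddCommGroup M] [Module R M] :
    M →ₗ[R] CharMod (CharMod M) where
  toFun m :=
    { toFun := fun c => c m
      map_zero' := rfl
      map_add' := fun _ _ => rfl }
  map_add' m m' := AddMonoidHom.ext fun c => c.map_add m m'
  map_smul' r m := AddMonoidHom.ext fun c => rfl

/-- A linear map `i : M → N` is a pure monomorphism if it is injective and every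
map from a finitely presented module to `N ⧸ im i` lifts to `N`, i.e. the short exact
sequence `0 → M → N → N ⧸ im i → 0` remains exact after applying `Hom(F, -)` for all
finitely presented `F`. -/
def IsPureMono {R : Type v} [Ring R] {M N : Type u} [AddCommGroup M] [Module R M]
    [AddCommGroup N] [Module R N] (i : M →ₗ[R] N) : Prop :=
  Function.Injective i ∧
    ∀ (F : Type u) [AddCommGroup F] [Module R F], Module.FinitePresentation R F →
      ∀ g : F →ₗ[R] (N ⧸ LinearMap.range i),
        ∃ h : F →ₗ[R] N, (LinearMap.range i).mkQ.comp h = g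

/-- A module `E` is pure injective if every map to `E` extends along pure monomorphisms. -/
def IsPureInjective (R : Type v) [Ring R] (E : Type u) [AddCommGroup E] [Module R E] : Prop :=
  ∀ (M N : Type u) [AddCommGroup M] [Module R M] [AddCommGroup N] [Module R N]
    (i : M →ₗ[R] N), IsPureMono i →
      ∀ f : M →ₗ[R] E, ∃ g : N →ₗ[R] E, g.comp i = f

/-- A module `M` over an arbitrary ring `R` is flat iff every homomorphism from a finitely
presented module to `M` factors through a finitely generated free module (Lazard-Govorov);
we use this tensor-free characterization as the definition of flatness. -/
def IsFlat (R : Type v) [Ring R] (M : Type u) [AddCommGroup M] [Module R M] : Prop :=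
  ∀ (F : Type u) [AddCommGroup F] [Module R F], Module.FinitePresentation R F →
    ∀ g : F →ₗ[R] M, ∃ (n : ℕ) (p : F →ₗ[R] (Fin n → R)) (q : (Fin n → R) →ₗ[R] M),
      q.comp p = g

/-- A module `N` is cotorsion if `Ext¹(F, N) = 0` for every flat module `F`, equivalently
every short exact sequence `0 → N → B → F → 0` with `F` flat splits. -/
def IsCotorsion (R : Type v) [Ring R] (N : Type u) [AddCommGroup N] [Module R N] : Prop :=
  ∀ (B F : Type u) [AddCommGroup B] [Module R B] [AddCommGroup F] [Module R F],
    IsFlat R F → ∀ (i : N →ₗ[R] B) (p : B →ₗ[R] F), Function.Injective i →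
      Function.Surjective p → LinearMap.range i = LinearMap.ker p →
      ∃ r : B →ₗ[R] N, r.comp i = LinearMap.id

/-! ### Auxiliary lemmas -/

section CharExt

open MulOpposite

/-- Characters into `ℚ/ℤ` extend along subgroup inclusions. -/
lemma char_extend {G : Type u} [AddCommGroup G] (H : AddSubgroup G)
    (χ : H →+ AddCircle (1 : ℚ)) :
    ∃ ψ : G →+ AddCircle (1 : ℚ), ∀ h : H, ψ (h : G) = χ h := by
  have hinj : Function.Injective ((AddSubgroup.toIntSubmodule H).subtype) :=
    Submodule.injective_subtype _
  obtain ⟨ψ, hψ⟩ := CharacterModule.dual_surjective_of_injective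
    ((AddSubgroup.toIntSubmodule H).subtype) hinj (χ : CharacterModule H)
  exact ⟨ψ, fun h => by
    have := DFunLike.congr_fun hψ h
    exact this⟩

/-- `ℚ/ℤ` is a cogenerator: a character vanishing on a subgroup but not on a point
outside it. -/
lemma char_vanish_ne {G : Type u} [AddCommGroup G] (H : AddSubgroup G) {a : G}
    (ha : a ∉ H) :
    ∃ ψ : G →+ AddCircle (1 : ℚ), (∀ h ∈ H, ψ h = 0) ∧ ψ a ≠ 0 := by
  have hne : (QuotientAddGroup.mk' H a) ≠ 0 := by
    simpa [QuotientAddGroup.eq_zero_iff] using ha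
  obtain ⟨c, hc⟩ := CharacterModule.exists_character_apply_ne_zero_of_ne_zero hne
  refine ⟨(c : (G ⧸ H) →+ AddCircle (1 : ℚ)).comp (QuotientAddGroup.mk' H), ?_, ?_⟩
  · intro h hh
    show c ((QuotientAddGroup.mk' H) h) = 0
    rw [show (QuotientAddGroup.mk' H) h = 0 from (QuotientAddGroup.eq_zero_iff h).mpr hh, map_zero]
  · exact hc

end CharExt
section PureSolv

open MulOpposite

variable {S : Type u} [Ring S]

/-- helper: `∑ k, v k • Pi.single k 1 = v`. -/
lemma sum_smul_single {p : ℕ} (v : Fin p → S) :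
    ∑ k, v k • (Pi.single k 1 : Fin p → S) = v := by
  funext k'
  rw [Finset.sum_apply]
  rw [Finset.sum_eq_single k' (fun k _ hk => by simp [Pi.single_apply, Ne.symm hk]) (by simp)]
  simp

/-- Lemma P: along a pure monomorphism, solvability of finite linear systems descends. -/
lemma pure_solv {M N : Type u} [AddCommGroup M] [Module S M]
    [AddCommGroup N] [Module S N] {i : M →ₗ[S] N} (hi : IsPureMono i)
    {J : Type w} [Fintype J] {p : ℕ}
    (s : J → Fin p → S) (m : J → M) (y : Fin p → N)
    (hy : ∀ j, i (m j) = ∑ k, s j k • y k) :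
    ∃ z : Fin p → M, ∀ j, m j = ∑ k, s j k • z k := by
  classical
  set φ : (Fin p → S) →ₗ[S] N :=
    { toFun := fun v => ∑ k, v k • y k
      map_add' := fun v w => by simp [add_smul, Finset.sum_add_distrib]
      map_smul' := fun c v => by simp [mul_smul, Finset.smul_sum] } with hφ
  have hφs : ∀ v : Fin p → S, φ v = ∑ k, v k • y k := fun _ => rfl
  set K : Submodule S (Fin p → S) := Submodule.span S (Set.range s) with hK
  have hφσ : ∀ j, φ (s j) = i (m j) := fun j => (hy j).symm
  have hFP : Module.FinitePresentation S ((Fin p → S) ⧸ K) := by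
    refine Module.finitePresentation_of_surjective K.mkQ (Submodule.mkQ_surjective K) ?_
    rw [Submodule.ker_mkQ]
    exact Submodule.fg_span (Set.finite_range s)
  have hKker : K ≤ LinearMap.ker ((LinearMap.range i).mkQ.comp φ) := by
    rw [hK, Submodule.span_le]
    rintro _ ⟨j, rfl⟩
    simp only [SetLike.mem_coe, LinearMap.mem_ker, LinearMap.comp_apply, hφσ]
    exact (Submodule.Quotient.mk_eq_zero _).mpr ⟨m j, rfl⟩
  set g : ((Fin p → S) ⧸ K) →ₗ[S] (N ⧸ LinearMap.range i) :=
    K.liftQ ((LinearMap.range i).mkQ.comp φ) hKker with hg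
  obtain ⟨h, hh⟩ := hi.2 _ hFP g
  have hghmk : ∀ v : Fin p → S, (LinearMap.range i).mkQ (h (K.mkQ v))
      = (LinearMap.range i).mkQ (φ v) := by
    intro v
    have h1 : (LinearMap.range i).mkQ (h (K.mkQ v)) = g (K.mkQ v) := by
      rw [← hh]; rfl
    rw [h1, hg, Submodule.mkQ_apply, Submodule.liftQ_apply, LinearMap.comp_apply]
  have hd : ∀ k : Fin p, ∃ zk : M,
      i zk = φ (Pi.single k 1) - h (K.mkQ (Pi.single k 1)) := by
    intro k
    have : (LinearMap.range i).mkQ (φ (Pi.single k 1) - h (K.mkQ (Pi.single k 1))) = 0 := by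
      rw [map_sub, hghmk, sub_self]
    rcases (Submodule.Quotient.mk_eq_zero _).mp this with ⟨zk, hzk⟩
    exact ⟨zk, hzk⟩
  choose z hz using hd
  have e0 : ∀ v : Fin p → S, ∑ k, v k • i (z k) = φ v - h (K.mkQ v) := by
    intro v
    simp_rw [hz, smul_sub]
    rw [Finset.sum_sub_distrib]
    congr 1
    · have h2 : ∀ k, v k • φ (Pi.single k 1) = φ (v k • (Pi.single k 1 : Fin p → S)) :=
        fun k => (map_smul φ _ _).symm
      simp_rw [h2]
      rw [← map_sum]
      congr 1
      exact sum_smul_single v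
    · have h2 : ∀ k, v k • h (K.mkQ (Pi.single k 1))
          = h (K.mkQ (v k • (Pi.single k 1 : Fin p → S))) := fun k => by
        rw [map_smul, map_smul]
      simp_rw [h2]
      rw [← map_sum, ← map_sum]
      congr 2
      exact sum_smul_single v
  refine ⟨z, fun j => ?_⟩
  apply hi.1
  have e3 : K.mkQ (s j) = 0 := by
    rw [Submodule.mkQ_apply, Submodule.Quotient.mk_eq_zero]
    exact Submodule.subset_span ⟨j, rfl⟩
  have : i (∑ k, s j k • z k) = ∑ k, s j k • i (z k) := by
    rw [map_sum]; simp_rw [map_smul]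
  rw [this, e0 (s j), e3, map_zero, sub_zero, hφσ]

/-- Lemma A: a submodule with flat quotient is pure. -/
lemma pure_of_flat_quotient {M B F : Type u} [AddCommGroup M] [Module S M]
    [AddCommGroup B] [Module S B] [AddCommGroup F] [Module S F]
    (hF : IsFlat S F) (i : M →ₗ[S] B) (p : B →ₗ[S] F) (hi : Function.Injective i)
    (hp : Function.Surjective p) (hrk : LinearMap.range i = LinearMap.ker p) :
    IsPureMono i := by
  classical
  refine ⟨hi, fun G _ _ hG g => ?_⟩
  set e : (B ⧸ LinearMap.range i) ≃ₗ[S] F :=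
    (Submodule.quotEquivOfEq _ _ hrk).trans (p.quotKerEquivOfSurjective hp) with he
  have hemk : ∀ b : B, e (Submodule.Quotient.mk b) = p b := by
    intro b
    rw [he]
    rfl
  obtain ⟨n, pr, q, hq⟩ := hF G hG (e.toLinearMap.comp g)
  have hc : ∀ k : Fin n, ∃ ck : B, p ck = q (Pi.single k 1) := fun k => hp _
  choose c hc using hc
  set qt : (Fin n → S) →ₗ[S] B :=
    { toFun := fun v => ∑ k, v k • c k
      map_add' := fun v w => by simp [add_smul, Finset.sum_add_distrib]
      map_smul' := fun r v => by simp [mul_smul, Finset.smul_sum] } with hqt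
  have hpq : ∀ v, p (qt v) = q v := by
    intro v
    rw [hqt]
    simp only [LinearMap.coe_mk, AddHom.coe_mk, map_sum, map_smul]
    simp_rw [hc]
    have h2 : ∀ k, v k • q (Pi.single k 1) = q (v k • (Pi.single k 1 : Fin n → S)) :=
      fun k => (map_smul q _ _).symm
    simp_rw [h2]
    rw [← map_sum]
    congr 1
    exact sum_smul_single v
  refine ⟨qt.comp pr, ?_⟩
  ext x
  apply e.injective
  rw [LinearMap.comp_apply, LinearMap.comp_apply, Submodule.mkQ_apply, hemk, hpq]
  have := DFunLike.congr_fun hq x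
  simpa using this

end PureSolv
section Tens

open MulOpposite TensorProduct

variable (R : Type u) [Ring R] (N : Type u) [AddCommGroup N] [Module Rᵐᵒᵖ N]
  (A : Type u) [AddCommGroup A] [Module R A]

/-- Balance relations for the tensor product of a right module and a left module. -/
noncomputable def balSub : AddSubgroup (N ⊗[ℤ] A) :=
  AddSubgroup.closure
    {z | ∃ (r : R) (x : N) (a : A), z = (op r • x) ⊗ₜ[ℤ] a - x ⊗ₜ[ℤ] (r • a)}

/-- Tensor product of a right `R`-module and a left `R`-module, as an abelian group. -/
def Tens : Type u := (N ⊗[ℤ] A) ⧸ balSub R N A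

noncomputable instance : AddCommGroup (Tens R N A) :=
  inferInstanceAs (AddCommGroup ((N ⊗[ℤ] A) ⧸ balSub R N A))

variable {N A}

/-- The canonical generator `x ⊗ a` of `Tens R N A`. -/
noncomputable def tmk (x : N) (a : A) : Tens R N A := QuotientAddGroup.mk (x ⊗ₜ[ℤ] a)

variable {R}

lemma tmk_add_left (x x' : N) (a : A) :
    tmk R (x + x') a = tmk R x a + tmk R x' a := by
  show QuotientAddGroup.mk _ = QuotientAddGroup.mk (_ + _)
  rw [add_tmul]

lemma tmk_add_right (x : N) (a a' : A) :
    tmk R x (a + a') = tmk R x a + tmk R x a' := by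
  show QuotientAddGroup.mk _ = QuotientAddGroup.mk (_ + _)
  rw [tmul_add]

lemma tmk_zero_left (a : A) : tmk R (0 : N) a = 0 := by
  show QuotientAddGroup.mk _ = QuotientAddGroup.mk (0 : N ⊗[ℤ] A)
  rw [zero_tmul]

lemma tmk_zero_right (x : N) : tmk R x (0 : A) = 0 := by
  show QuotientAddGroup.mk _ = QuotientAddGroup.mk (0 : N ⊗[ℤ] A)
  rw [tmul_zero]

lemma tmk_neg_left (x : N) (a : A) : tmk R (-x) a = - tmk R x a := by
  show QuotientAddGroup.mk _ = -QuotientAddGroup.mk _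
  rw [neg_tmul]
  exact QuotientAddGroup.mk_neg ..

lemma tmk_bal (r : R) (x : N) (a : A) : tmk R (op r • x) a = tmk R x (r • a) := by
  refine (QuotientAddGroup.eq_iff_sub_mem).mpr ?_
  exact AddSubgroup.subset_closure ⟨r, x, a, rfl⟩

/-- `tmk` as an additive map in the left variable. -/
noncomputable def tmkL (a : A) : N →+ Tens R N A :=
  AddMonoidHom.mk' (fun x => tmk R x a) (fun x x' => tmk_add_left x x' a)

lemma tmk_sum_left {ι : Type*} (t : Finset ι) (x : ι → N) (a : A) :
    tmk R (∑ j ∈ t, x j) a = ∑ j ∈ t, tmk R (x j) a :=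
  map_sum (tmkL a) x t

/-- Lift a balanced biadditive map to `Tens`. -/
noncomputable def tlift {Q : Type*} [AddCommGroup Q] (β : N →+ A →+ Q)
    (hbal : ∀ (r : R) (x : N) (a : A), β (op r • x) a = β x (r • a)) :
    Tens R N A →+ Q := by
  refine QuotientAddGroup.lift _
    (TensorProduct.liftAddHom β (fun z x a => by simp)) ?_
  intro z hz
  refine AddSubgroup.closure_induction ?_ ?_ ?_ ?_ hz
  · rintro _ ⟨r, x, a, rfl⟩
    rw [AddMonoidHom.mem_ker, map_sub, TensorProduct.liftAddHom_tmul,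
      TensorProduct.liftAddHom_tmul, hbal, sub_self]
  · exact AddMonoidHom.mem_ker.mpr (map_zero _)
  · intro u v _ _ hu hv
    rw [AddMonoidHom.mem_ker] at hu hv ⊢
    rw [map_add, hu, hv, add_zero]
  · intro u _ hu
    rw [AddMonoidHom.mem_ker] at hu ⊢
    rw [map_neg, hu, neg_zero]

@[simp] lemma tlift_tmk {Q : Type*} [AddCommGroup Q] (β : N →+ A →+ Q)
    (hbal : ∀ (r : R) (x : N) (a : A), β (op r • x) a = β x (r • a))
    (x : N) (a : A) : tlift β hbal (tmk R x a) = β x a := rfl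

/-- Functoriality of `Tens` in the right-module variable. -/
noncomputable def tmapLeft {N' : Type u} [AddCommGroup N'] [Module Rᵐᵒᵖ N'] (j : N →ₗ[Rᵐᵒᵖ] N') :
    Tens R N A →+ Tens R N' A := by
  refine tlift (AddMonoidHom.mk' (fun x => AddMonoidHom.mk' (fun a => tmk R (j x) a)
    (fun a a' => tmk_add_right _ a a')) ?_) ?_
  · intro x x'
    refine AddMonoidHom.ext fun a => ?_
    simp only [AddMonoidHom.mk'_apply, AddMonoidHom.add_apply, map_add]
    exact tmk_add_left _ _ a
  · intro r x a
    simp only [AddMonoidHom.mk'_apply, map_smul]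
    exact tmk_bal r (j x) a

@[simp] lemma tmapLeft_tmk {N' : Type u} [AddCommGroup N'] [Module Rᵐᵒᵖ N']
    (j : N →ₗ[Rᵐᵒᵖ] N') (x : N) (a : A) :
    tmapLeft j (tmk R x a) = tmk R (j x) a := rfl

/-- Functoriality of `Tens` in the left-module variable. -/
noncomputable def tmapRight {A' : Type u} [AddCommGroup A'] [Module R A'] (ε : A' →ₗ[R] A) :
    Tens R N A' →+ Tens R N A := by
  refine tlift (AddMonoidHom.mk' (fun x => AddMonoidHom.mk' (fun a' => tmk R x (ε a'))
    (fun a a' => by show tmk R x (ε (a + a')) = _; rw [map_add]; exact tmk_add_right _ _ _)) ?_) ?_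
  · intro x x'
    refine AddMonoidHom.ext fun a => ?_
    simp only [AddMonoidHom.mk'_apply, AddMonoidHom.add_apply]
    exact tmk_add_left _ _ _
  · intro r x a'
    simp only [AddMonoidHom.mk'_apply]
    rw [tmk_bal, ← map_smul]

@[simp] lemma tmapRight_tmk {A' : Type u} [AddCommGroup A'] [Module R A']
    (ε : A' →ₗ[R] A) (x : N) (a' : A') :
    tmapRight ε (tmk R x a') = tmk R x (ε a') := rfl

/-- Every element of `Tens` is a finite sum of generators. -/
lemma Tens.exists_repr (u : Tens R N A) :
    ∃ (n : ℕ) (x : Fin n → N) (a : Fin n → A), u = ∑ j, tmk R (x j) (a j) := by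
  obtain ⟨z, rfl⟩ := QuotientAddGroup.mk_surjective u
  induction z using TensorProduct.induction_on with
  | zero =>
    exact ⟨0, Fin.elim0, Fin.elim0, by simp; rfl⟩
  | tmul x a =>
    exact ⟨1, fun _ => x, fun _ => a, by rw [Fin.sum_univ_one]; rfl⟩
  | add z w hz hw =>
    obtain ⟨n₁, x₁, a₁, h₁⟩ := hz
    obtain ⟨n₂, x₂, a₂, h₂⟩ := hw
    refine ⟨n₁ + n₂, Fin.append x₁ x₂, Fin.append a₁ a₂, ?_⟩
    rw [show (QuotientAddGroup.mk (z + w) : Tens R N A)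
      = QuotientAddGroup.mk z + QuotientAddGroup.mk w from rfl, h₁, h₂, Fin.sum_univ_add]
    congr 1
    · exact Finset.sum_congr rfl fun j _ => by rw [Fin.append_left, Fin.append_left]
    · exact Finset.sum_congr rfl fun j _ => by rw [Fin.append_right, Fin.append_right]

end Tens
section Criterion

open MulOpposite TensorProduct Finsupp

variable {R : Type u} [Ring R] {N : Type u} [AddCommGroup N] [Module Rᵐᵒᵖ N]
  {A : Type u} [AddCommGroup A] [Module R A]

lemma tmk_neg_right (x : N) (a : A) : tmk R x (-a) = - tmk R x a := by
  have h := tmk_add_right (R := R) x a (-a)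
  rw [add_neg_cancel, tmk_zero_right] at h
  exact (neg_eq_of_add_eq_zero_right h.symm).symm

lemma tmk_sub_right (x : N) (a a' : A) : tmk R x (a - a') = tmk R x a - tmk R x a' := by
  rw [sub_eq_add_neg, tmk_add_right, tmk_neg_right, sub_eq_add_neg]

/-- Coordinate evaluation on `Tens R N (ι →₀ R)`. -/
noncomputable def tev {ι : Type u} (i : ι) : Tens R N (ι →₀ R) →+ N := by
  refine tlift (AddMonoidHom.mk' (fun x => AddMonoidHom.mk'
      (fun f : ι →₀ R => op (f i) • x) ?_) ?_) ?_
  · intro f g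
    show op ((f + g) i) • x = _
    rw [Finsupp.add_apply, op_add, add_smul]
  · intro x x'
    refine AddMonoidHom.ext fun f => ?_
    show op (f i) • (x + x') = op (f i) • x + op (f i) • x'
    rw [smul_add]
  · intro r x f
    simp only [AddMonoidHom.mk'_apply]
    rw [Finsupp.smul_apply, smul_eq_mul, ← mul_smul, ← op_mul]

@[simp] lemma tev_tmk {ι : Type u} (i : ι) (x : N) (f : ι →₀ R) :
    tev i (tmk R x f) = op (f i) • x := rfl

/-- The equational criterion for vanishing in `Tens`. -/
lemma Tens.criterion {n : ℕ} (x : Fin n → N) (a : Fin n → A)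
    (h : ∑ j, tmk R (x j) (a j) = 0) :
    ∃ (p : ℕ) (y : Fin p → N) (κ : Fin p → ((Fin n ⊕ A) →₀ R)),
      (∀ j, x j = ∑ k, op (κ k (Sum.inl j)) • y k) ∧
      (∀ a' : A, (0 : N) = ∑ k, op (κ k (Sum.inr a')) • y k) ∧
      (∀ k, Finsupp.linearCombination R (Sum.elim a id) (κ k) = 0) := by
  classical
  set b : (Fin n ⊕ A) → A := Sum.elim a id with hb
  set ε : ((Fin n ⊕ A) →₀ R) →ₗ[R] A := Finsupp.linearCombination R b with hε
  set W : AddSubgroup (Tens R N ((Fin n ⊕ A) →₀ R)) :=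
    AddSubgroup.closure {u | ∃ (x₀ : N) (κ₀ : (Fin n ⊕ A) →₀ R), ε κ₀ = 0 ∧ u = tmk R x₀ κ₀}
    with hWdef
  -- two generators with the same image under ε give the same class mod W
  have hWeq : ∀ (x₀ : N) (s₁ s₂ : (Fin n ⊕ A) →₀ R), ε s₁ = ε s₂ →
      (QuotientAddGroup.mk (tmk R x₀ s₁) : _ ⧸ W)
        = QuotientAddGroup.mk (tmk R x₀ s₂) := by
    intro x₀ s₁ s₂ hs
    refine (QuotientAddGroup.eq_iff_sub_mem).mpr ?_
    rw [← tmk_sub_right]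
    exact AddSubgroup.subset_closure ⟨x₀, s₁ - s₂, by rw [map_sub, hs, sub_self], rfl⟩
  -- the comparison map γ
  set γ : Tens R N A →+ (Tens R N ((Fin n ⊕ A) →₀ R)) ⧸ W :=
    tlift (AddMonoidHom.mk' (fun x₀ => AddMonoidHom.mk'
      (fun a₀ : A => (QuotientAddGroup.mk (tmk R x₀ (Finsupp.single (Sum.inr a₀) (1:R)))
        : _ ⧸ W))
      (fun a₀ a₀' => by
        rw [← QuotientAddGroup.mk_add, ← tmk_add_right]
        exact hWeq _ _ _ (by
          rw [map_add]
          simp only [hε, Finsupp.linearCombination_single, one_smul]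
          rfl)))
      (fun x₀ x₀' => by
        refine AddMonoidHom.ext fun a₀ => ?_
        show _ = (QuotientAddGroup.mk _ : _ ⧸ W) + QuotientAddGroup.mk _
        rw [← QuotientAddGroup.mk_add, ← tmk_add_left]
        rfl))
      (fun r x₀ a₀ => by
        show (QuotientAddGroup.mk (tmk R (op r • x₀) (Finsupp.single (Sum.inr a₀) (1:R)))
          : _ ⧸ W) = QuotientAddGroup.mk (tmk R x₀ (Finsupp.single (Sum.inr (r • a₀)) (1:R)))
        rw [tmk_bal]
        refine hWeq _ _ _ ?_
        rw [map_smul]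
        simp only [hε, Finsupp.linearCombination_single, one_smul]
        rfl) with hγ
  have hγtmk : ∀ (x₀ : N) (a₀ : A), γ (tmk R x₀ a₀)
      = QuotientAddGroup.mk (tmk R x₀ (Finsupp.single (Sum.inr a₀) (1:R))) := fun _ _ => rfl
  -- γ ∘ tmapRight ε = projection mod W
  have hcomm : ∀ u, γ (tmapRight ε u) = QuotientAddGroup.mk u := by
    intro u
    obtain ⟨m, xs, fs, rfl⟩ := Tens.exists_repr u
    rw [map_sum, map_sum]
    rw [show (QuotientAddGroup.mk (∑ j, tmk R (xs j) (fs j)) : _ ⧸ W)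
      = ∑ j, QuotientAddGroup.mk (tmk R (xs j) (fs j)) from map_sum
        (QuotientAddGroup.mk' W) _ _]
    refine Finset.sum_congr rfl fun j _ => ?_
    induction fs j using Finsupp.induction with
    | zero =>
      rw [tmk_zero_right, map_zero, map_zero]
      simp
    | single_add i r f hif hr ih =>
      rw [tmk_add_right, map_add, map_add]
      rw [show (QuotientAddGroup.mk (tmk R (xs j) (Finsupp.single i r) + tmk R (xs j) f)
        : _ ⧸ W) = QuotientAddGroup.mk (tmk R (xs j) (Finsupp.single i r))
          + QuotientAddGroup.mk (tmk R (xs j) f) from rfl, ← ih]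
      congr 1
      rw [tmapRight_tmk,
        show ε (Finsupp.single i r) = r • b i from Finsupp.linearCombination_single _ _ _,
        hγtmk]
      refine hWeq _ _ _ ?_
      rw [show ε (Finsupp.single (Sum.inr (r • b i)) (1:R)) = (1:R) • (r • b i)
        from Finsupp.linearCombination_single _ _ _,
        show ε (Finsupp.single i r) = r • b i from Finsupp.linearCombination_single _ _ _,
        one_smul]
  -- the canonical lift of the given relation
  set t : Tens R N ((Fin n ⊕ A) →₀ R) :=
    ∑ j, tmk R (x j) (Finsupp.single (Sum.inl j) (1:R)) with ht
  have htW : t ∈ W := by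
    have h0 : tmapRight ε t = 0 := by
      have h1 : ∀ j : Fin n, tmapRight (N := N) ε (tmk R (x j) (Finsupp.single (Sum.inl j) (1:R)))
          = tmk R (x j) (a j) := by
        intro j
        rw [tmapRight_tmk]
        congr 1
        rw [show ε (Finsupp.single (Sum.inl j) (1:R)) = (1:R) • b (Sum.inl j)
          from Finsupp.linearCombination_single _ _ _, one_smul]
        rfl
      rw [ht, map_sum]
      rw [Finset.sum_congr rfl fun j _ => h1 j]
      exact h
    have := hcomm t
    rw [h0, map_zero] at this
    exact (QuotientAddGroup.eq_zero_iff t).mp this.symm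
  -- extract a finite representation of t by generators of W
  have hrep : ∃ (p : ℕ) (y : Fin p → N) (κ : Fin p → ((Fin n ⊕ A) →₀ R)),
      (∀ k, ε (κ k) = 0) ∧ t = ∑ k, tmk R (y k) (κ k) := by
    clear ht
    refine AddSubgroup.closure_induction ?_ ?_ ?_ ?_ htW
    · rintro _ ⟨x₀, κ₀, hκ₀, rfl⟩
      exact ⟨1, fun _ => x₀, fun _ => κ₀, fun _ => hκ₀, by rw [Fin.sum_univ_one]⟩
    · exact ⟨0, Fin.elim0, Fin.elim0, fun k => k.elim0, by simp⟩
    · rintro u v _ _ ⟨p₁, y₁, κ₁, hκ₁, rfl⟩ ⟨p₂, y₂, κ₂, hκ₂, rfl⟩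
      refine ⟨p₁ + p₂, Fin.append y₁ y₂, Fin.append κ₁ κ₂, ?_, ?_⟩
      · intro k
        refine Fin.addCases (fun k1 => ?_) (fun k2 => ?_) k
        · rw [Fin.append_left]
          exact hκ₁ k1
        · rw [Fin.append_right]
          exact hκ₂ k2
      · rw [Fin.sum_univ_add]
        congr 1
        · exact Finset.sum_congr rfl fun k _ => by rw [Fin.append_left, Fin.append_left]
        · exact Finset.sum_congr rfl fun k _ => by rw [Fin.append_right, Fin.append_right]
    · rintro u _ ⟨p₁, y₁, κ₁, hκ₁, rfl⟩
      refine ⟨p₁, fun k => -(y₁ k), κ₁, hκ₁, ?_⟩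
      rw [show (∑ k, tmk R (-(y₁ k)) (κ₁ k)) = ∑ k, -(tmk R (y₁ k) (κ₁ k)) from
        Finset.sum_congr rfl fun k _ => tmk_neg_left _ _]
      rw [← Finset.sum_neg_distrib]
  obtain ⟨p, y, κ, hκ, hteq⟩ := hrep
  have hev : ∀ i : Fin n ⊕ A, tev i t = ∑ k, op (κ k i) • y k := by
    intro i
    rw [hteq, map_sum]
    rfl
  have hevt : ∀ i : Fin n ⊕ A, tev i t
      = ∑ j, op ((Finsupp.single (Sum.inl j) (1:R)) i) • x j := by
    intro i
    rw [ht, map_sum]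
    rfl
  refine ⟨p, y, κ, ?_, ?_, fun k => hκ k⟩
  · intro j
    have h1 : tev (Sum.inl j : Fin n ⊕ A) t = x j := by
      rw [hevt]
      have h2 : ∀ j' : Fin n,
          op ((Finsupp.single (Sum.inl j' : Fin n ⊕ A) (1:R)) (Sum.inl j)) • x j'
          = if j' = j then x j' else 0 := by
        intro j'
        rw [Finsupp.single_apply]
        by_cases hjj : j' = j
        · rw [if_pos (by rw [hjj]), if_pos hjj, op_one, one_smul]
        · rw [if_neg (by simpa using hjj), if_neg hjj, op_zero, zero_smul]
      rw [Finset.sum_congr rfl fun j' _ => h2 j']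
      rw [Finset.sum_ite_eq' Finset.univ j (fun j' => x j')]
      rw [if_pos (Finset.mem_univ j)]
    rw [← h1, hev]
  · intro a'
    have h1 : tev (Sum.inr a' : Fin n ⊕ A) t = 0 := by
      rw [hevt]
      refine Finset.sum_eq_zero fun j' _ => ?_
      rw [Finsupp.single_apply, if_neg (by simp), op_zero, zero_smul]
    rw [← h1, hev]

end Criterion
section CharCotorsion

open MulOpposite

variable {R : Type u} [Ring R] {A : Type u} [AddCommGroup A] [Module R A]

/-- Evaluation at a point, as an additive map on characters. -/
def cEval (a : A) : CharMod A →+ AddCircle (1 : ℚ) :=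
  AddMonoidHom.mk' (fun χ => χ a) (fun χ χ' => rfl)

@[simp] lemma cEval_apply (a : A) (χ : CharMod A) : cEval a χ = χ a := rfl

/-- Character modules of left `R`-modules are cotorsion right `R`-modules. -/
lemma charMod_cotorsion : IsCotorsion Rᵐᵒᵖ (CharMod A) := by
  classical
  intro B F _ _ _ _ hF i pq hi hp hrk
  have hpure : IsPureMono i := pure_of_flat_quotient hF i pq hi hp hrk
  -- the evaluation character on Tens R (CharMod A) A
  set E : Tens R (CharMod A) A →+ AddCircle (1 : ℚ) :=
    tlift (AddMonoidHom.mk' (fun χ : CharMod A => AddMonoidHom.mk' (fun a : A => χ a)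
        (fun a a' => map_add χ a a'))
      (fun χ χ' => AddMonoidHom.ext fun a => rfl))
      (fun r χ a => rfl) with hE
  have hEtmk : ∀ (χ : CharMod A) (a : A), E (tmk R χ a) = χ a := fun _ _ => rfl
  set J : Tens R (CharMod A) A →+ Tens R B A := tmapLeft i with hJ
  -- E vanishes on the kernel of J
  have hEker : ∀ u, J u = 0 → E u = 0 := by
    intro u hu
    obtain ⟨n, χv, av, rfl⟩ := Tens.exists_repr u
    rw [map_sum, Finset.sum_congr rfl (fun j _ => tmapLeft_tmk i (χv j) (av j))] at hu
    obtain ⟨p, y, κ, h1, h2, h3⟩ := Tens.criterion (fun j => i (χv j)) av hu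
    set T : Finset A := Finset.univ.biUnion
      (fun k : Fin p => ((κ k).support.toList.filterMap Sum.getRight?).toFinset) with hT
    have hTmem : ∀ (k : Fin p) (a' : A), Sum.inr a' ∈ (κ k).support → a' ∈ T := by
      intro k a' hmem
      rw [hT]
      refine Finset.mem_biUnion.mpr ⟨k, Finset.mem_univ k, ?_⟩
      rw [List.mem_toFinset, List.mem_filterMap]
      exact ⟨Sum.inr a', Finset.mem_toList.mpr hmem, rfl⟩
    -- solve the corresponding system in CharMod A using purity
    set mu : (Fin n ⊕ {a' : A // a' ∈ T}) → CharMod A := Sum.elim χv (fun _ => 0) with hmu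
    set sm : (Fin n ⊕ {a' : A // a' ∈ T}) → Fin p → Rᵐᵒᵖ :=
      Sum.elim (fun j k => op (κ k (Sum.inl j))) (fun t k => op (κ k (Sum.inr t.1))) with hsm
    have hsys : ∀ c, i (mu c) = ∑ k, sm c k • y k := by
      rintro (j | t)
      · exact h1 j
      · show i 0 = _
        rw [map_zero]
        exact h2 t.1
    obtain ⟨z, hz⟩ := pure_solv hpure sm mu y hsys
    have hzl : ∀ j : Fin n, χv j = ∑ k, op (κ k (Sum.inl j)) • z k := fun j => hz (Sum.inl j)
    have hzr : ∀ a' : A, a' ∈ T → (0 : CharMod A) = ∑ k, op (κ k (Sum.inr a')) • z k :=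
      fun a' ha' => hz (Sum.inr ⟨a', ha'⟩)
    -- the balancing identity coming from ε (κ k) = 0
    set s' : Finset (Fin n ⊕ A) := Finset.univ.image Sum.inl ∪ T.image Sum.inr with hs'
    have key : ∀ k : Fin p,
        (∑ j, (z k) ((κ k (Sum.inl j)) • av j))
          + (∑ a' ∈ T, (z k) ((κ k (Sum.inr a')) • a')) = 0 := by
      intro k
      have hsub : (κ k).support ⊆ s' := by
        intro i' hi'
        rcases i' with j | a'
        · exact Finset.mem_union_left _ (Finset.mem_image.mpr ⟨j, Finset.mem_univ j, rfl⟩)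
        · exact Finset.mem_union_right _ (Finset.mem_image.mpr ⟨a', hTmem k a' hi', rfl⟩)
      have hε0 : ∑ i' ∈ s', (κ k i') • (Sum.elim av id i') = 0 := by
        have h4 := h3 k
        rw [Finsupp.linearCombination_apply, Finsupp.sum] at h4
        rw [← Finset.sum_subset hsub (fun i' _ hni => by
          rw [Finsupp.notMem_support_iff.mp hni, zero_smul])]
        exact h4
      have h5 : (0 : AddCircle (1:ℚ)) = z k (∑ i' ∈ s', (κ k i') • (Sum.elim av id i')) := by
        rw [hε0, map_zero]
      rw [map_sum] at h5
      rw [hs', Finset.sum_union ?hdisj] at h5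
      case hdisj =>
        refine Finset.disjoint_left.mpr ?_
        rintro _ hx hy
        obtain ⟨j, _, rfl⟩ := Finset.mem_image.mp hx
        obtain ⟨a', _, hc⟩ := Finset.mem_image.mp hy
        exact Sum.inr_ne_inl hc
      rw [Finset.sum_image (fun j _ j' _ hjj => Sum.inl_injective hjj),
        Finset.sum_image (fun a' _ a'' _ haa => Sum.inr_injective haa)] at h5
      exact h5.symm
    -- now compute E u
    rw [map_sum]
    rw [Finset.sum_congr rfl (fun j _ => hEtmk (χv j) (av j))]
    have e1 : ∀ j : Fin n, (χv j) (av j) = ∑ k, (z k) ((κ k (Sum.inl j)) • av j) := by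
      intro j
      rw [hzl j]
      rw [show ((∑ k, op (κ k (Sum.inl j)) • z k : CharMod A)) (av j)
        = cEval (av j) (∑ k, op (κ k (Sum.inl j)) • z k) from rfl]
      rw [map_sum]
      rfl
    rw [Finset.sum_congr rfl (fun j _ => e1 j)]
    rw [Finset.sum_comm]
    have e2 : ∀ k : Fin p, (∑ j, (z k) ((κ k (Sum.inl j)) • av j))
        = - (∑ a' ∈ T, (z k) ((κ k (Sum.inr a')) • a')) :=
      fun k => eq_neg_of_add_eq_zero_left (key k)
    rw [Finset.sum_congr rfl (fun k _ => e2 k)]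
    have e3 : ∀ a' ∈ T, (∑ k, (z k) ((κ k (Sum.inr a')) • a')) = 0 := by
      intro a' ha'
      have h6 : cEval a' (∑ k, op (κ k (Sum.inr a')) • z k) = 0 := by
        rw [← hzr a' ha']
        rfl
      rw [map_sum] at h6
      rw [← h6]
      rfl
    rw [show (∑ k : Fin p, -(∑ a' ∈ T, (z k) ((κ k (Sum.inr a')) • a')))
      = -(∑ k : Fin p, ∑ a' ∈ T, (z k) ((κ k (Sum.inr a')) • a'))
        from Finset.sum_neg_distrib _]
    rw [Finset.sum_comm]
    rw [Finset.sum_congr rfl e3, Finset.sum_const_zero, neg_zero]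
  -- E is invariant under the kernel of J
  have hEeq : ∀ u u', J u = J u' → E u = E u' := by
    intro u u' huu
    have h7 := hEker (u - u') (by rw [map_sub, huu, sub_self])
    rw [map_sub, sub_eq_zero] at h7
    exact h7
  have hpick : ∀ v : J.range, ∃ u, J u = (v : Tens R B A) := fun v => v.2
  choose pre hpre using hpick
  set χ₀ : J.range →+ AddCircle (1:ℚ) :=
    AddMonoidHom.mk' (fun v => E (pre v)) (fun v w => by
      show E (pre (v + w)) = E (pre v) + E (pre w)
      have h8 : J (pre (v + w)) = J (pre v + pre w) := by
        rw [map_add, hpre, hpre, hpre]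
        rfl
      rw [hEeq _ _ h8, map_add]) with hχ₀
  obtain ⟨Ψ, hΨ⟩ := char_extend J.range χ₀
  have hΨJ : ∀ u, Ψ (J u) = E u := by
    intro u
    have hm : J u ∈ J.range := ⟨u, rfl⟩
    have h8 := hΨ ⟨J u, hm⟩
    have h9 : E (pre ⟨J u, hm⟩) = E u := hEeq _ _ (hpre ⟨J u, hm⟩)
    rw [← h9]
    exact h8
  -- the retraction
  let rt : B →ₗ[Rᵐᵒᵖ] CharMod A :=
    { toFun := fun v => ((AddMonoidHom.mk' (fun a => Ψ (tmk R v a))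
        (fun a a' => by
          show Ψ (tmk R v (a + a')) = Ψ (tmk R v a) + Ψ (tmk R v a')
          rw [tmk_add_right, map_add])) : CharMod A)
      map_add' := fun v v' => AddMonoidHom.ext fun a => by
        show Ψ (tmk R (v + v') a) = Ψ (tmk R v a) + Ψ (tmk R v' a)
        rw [tmk_add_left, map_add]
      map_smul' := fun ρ v => AddMonoidHom.ext fun a => by
        show Ψ (tmk R (ρ • v) a) = Ψ (tmk R v (ρ.unop • a))
        conv_lhs => rw [← MulOpposite.op_unop ρ]
        rw [tmk_bal] }
  refine ⟨rt, ?_⟩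
  refine LinearMap.ext fun χ => ?_
  refine DFunLike.ext _ _ fun a => ?_
  show Ψ (tmk R (i χ) a) = χ a
  rw [← tmapLeft_tmk i χ a]
  exact (hΨJ (tmk R χ a)).trans (hEtmk χ a)

end CharCotorsion
section MainAux

open MulOpposite

variable {R : Type u} [Ring R] {A C : Type u} [AddCommGroup A] [Module R A]
  [AddCommGroup C] [Module R C]

/-- Finite systems with solutions in `C` and right-hand sides in `A` are solvable in `A`,
given a splitting of the dual map. -/
lemma solv_transfer (f : A →ₗ[R] C) (s : CharMod A →ₗ[Rᵐᵒᵖ] CharMod C)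
    (hs : ∀ χ : CharMod A, (charDual f) (s χ) = χ)
    {q n : ℕ} (t : Fin q → Fin n → R) (aa : Fin q → A) (c : Fin n → C)
    (hc : ∀ k, ∑ j, t k j • c j = f (aa k)) :
    ∃ bb : Fin n → A, ∀ k, ∑ j, t k j • bb j = aa k := by
  classical
  set D : (Fin n → A) →+ (Fin q → A) :=
    AddMonoidHom.mk' (fun bb => fun k => ∑ j, t k j • bb j) (fun bb bb' => by
      funext k
      show (∑ j, t k j • (bb j + bb' j)) = _
      simp [smul_add, Finset.sum_add_distrib]) with hD
  by_cases hmem : aa ∈ D.range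
  · obtain ⟨bb, hbb⟩ := hmem
    exact ⟨bb, fun k => congrFun hbb k⟩
  exfalso
  obtain ⟨ψ, hψ0, hψa⟩ := char_vanish_ne D.range hmem
  -- components of ψ
  set χc : Fin q → CharMod A := fun k =>
    (ψ.comp (AddMonoidHom.single (fun _ : Fin q => A) k) : CharMod A) with hχc
  have hdecomp : ∀ v : Fin q → A, ψ v = ∑ k, χc k (v k) := by
    intro v
    have h1 : v = ∑ k, Pi.single k (v k) := by
      rw [Finset.univ_sum_single v]
    rw [show ψ v = ψ (∑ k, Pi.single k (v k)) from by rw [← h1], map_sum]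
    rfl
  -- vanishing on the range gives linear relations among the χc
  have hvan : ∀ (j : Fin n), (∑ k, op (t k j) • χc k : CharMod A) = 0 := by
    intro j
    refine DFunLike.ext _ _ fun x => ?_
    have h2 : (D (Pi.single j x)) ∈ D.range := ⟨Pi.single j x, rfl⟩
    have h3 : ψ (D (Pi.single j x)) = 0 := hψ0 _ h2
    have h4 : ∀ k, (D (Pi.single j x)) k = t k j • x := by
      intro k
      show (∑ j', t k j' • Pi.single j x j') = t k j • x
      rw [Finset.sum_eq_single j (fun j' _ hj' => by
        rw [Pi.single_apply, if_neg hj', smul_zero]) (by simp)]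
      rw [Pi.single_eq_same]
    rw [hdecomp] at h3
    rw [Finset.sum_congr rfl (fun k _ => by rw [h4 k])] at h3
    show (∑ k, op (t k j) • χc k : CharMod A) x = (0 : CharMod A) x
    rw [show ((∑ k, op (t k j) • χc k : CharMod A)) x
      = cEval x (∑ k, op (t k j) • χc k) from rfl, map_sum]
    rw [Finset.sum_congr rfl (fun k _ =>
      (show cEval x (op (t k j) • χc k) = χc k (t k j • x) from rfl))]
    rw [h3]
    rfl
  -- lift along s and compute
  set ψc : Fin q → CharMod C := fun k => s (χc k) with hψc
  have hlin : ∀ j : Fin n, (∑ k, op (t k j) • ψc k : CharMod C) = 0 := by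
    intro j
    have h5 : (∑ k, op (t k j) • ψc k : CharMod C) = s (∑ k, op (t k j) • χc k) := by
      rw [map_sum]
      exact Finset.sum_congr rfl fun k _ => (map_smul s _ _).symm
    rw [h5, hvan j, map_zero]
  have heval : ∀ (k : Fin q) (x : A), ψc k (f x) = χc k x := by
    intro k x
    exact DFunLike.congr_fun (hs (χc k)) x
  have hfinal : ψ aa = 0 := by
    rw [hdecomp]
    have h6 : ∀ k, χc k (aa k) = ψc k (f (aa k)) := fun k => (heval k (aa k)).symm
    rw [Finset.sum_congr rfl fun k _ => h6 k]
    rw [Finset.sum_congr rfl fun k _ => by rw [← hc k]]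
    have h7 : ∀ k, ψc k (∑ j, t k j • c j) = ∑ j, ψc k (t k j • c j) := fun k => map_sum _ _ _
    rw [Finset.sum_congr rfl fun k _ => h7 k]
    rw [Finset.sum_comm]
    have h8 : ∀ j, (∑ k, ψc k (t k j • c j)) = cEval (c j) (∑ k, op (t k j) • ψc k) := by
      intro j
      rw [map_sum]
      rfl
    rw [Finset.sum_congr rfl fun j _ => h8 j]
    rw [Finset.sum_congr rfl fun j _ => by rw [hlin j, map_zero]]
    rw [Finset.sum_const_zero]
  exact hψa hfinal

end MainAux
/-- **Corollary 3.3 (cotorsion version).** If `f : A ↪ C` is a monomorphism of left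
`R`-modules with `C` pure injective, and `f⁺ : C⁺ → A⁺` is a precover of `A⁺` with respect
to the class of cotorsion right `R`-modules, then `f` is a pure injective preenvelope
of `A`. -/
theorem stmt7 {R : Type u} [Ring R] {A C : Type u}
    [AddCommGroup A] [Module R A] [AddCommGroup C] [Module R C]
    (hC : IsPureInjective R C) (f : A →ₗ[R] C) (hf : Function.Injective f)
    -- `f⁺` is a precover w.r.t. the class of cotorsion right `R`-modules:
    (hdom : IsCotorsion Rᵐᵒᵖ (CharMod C))
    (hfact : ∀ (Y : Type u) [AddCommGroup Y] [Module Rᵐᵒᵖ Y], IsCotorsion Rᵐᵒᵖ Y →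
      ∀ g : Y →ₗ[Rᵐᵒᵖ] CharMod A, ∃ h : Y →ₗ[Rᵐᵒᵖ] CharMod C, (charDual f).comp h = g) :
    -- `f` is a pure injective preenvelope of `A`:
    ∀ (X : Type u) [AddCommGroup X] [Module R X], IsPureInjective R X →
      ∀ g : A →ₗ[R] X, ∃ h : C →ₗ[R] X, h.comp f = g := by
  intro X _ _ hX g
  obtain ⟨s, hs⟩ := hfact (CharMod A) charMod_cotorsion LinearMap.id
  have hsp : ∀ χ : CharMod A, (charDual f) (s χ) = χ := fun χ => DFunLike.congr_fun hs χ
  -- `f` is a pure monomorphism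
  have hpure : IsPureMono f := by
    refine ⟨hf, ?_⟩
    intro G _ _ hG g0
    classical
    haveI := hG
    obtain ⟨n, sg, hsg⟩ := Module.Finite.exists_fin (R := R) (M := G)
    set π : (Fin n → R) →ₗ[R] G :=
      { toFun := fun v => ∑ j, v j • sg j
        map_add' := fun v w => by simp [add_smul, Finset.sum_add_distrib]
        map_smul' := fun r v => by simp [mul_smul, Finset.smul_sum] } with hπ
    have hπs : ∀ v : Fin n → R, π v = ∑ j, v j • sg j := fun _ => rfl
    have hπsingle : ∀ j, π (Pi.single j 1) = sg j := by
      intro j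
      rw [hπs]
      rw [Finset.sum_eq_single j (fun j' _ hj' => by
        rw [Pi.single_apply, if_neg hj', zero_smul]) (by simp)]
      rw [Pi.single_eq_same, one_smul]
    have hrange : LinearMap.range π = ⊤ := by
      rw [← top_le_iff, ← hsg, Submodule.span_le]
      rintro _ ⟨j, rfl⟩
      exact ⟨Pi.single j 1, hπsingle j⟩
    have hπsurj : Function.Surjective π := LinearMap.range_eq_top.mp hrange
    have hker : (LinearMap.ker π).FG := Module.FinitePresentation.fg_ker π hπsurj
    obtain ⟨q, τ, hτ⟩ := Submodule.fg_iff_exists_fin_generating_family.mp hker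
    have hcex : ∀ j : Fin n, ∃ cj : C, Submodule.Quotient.mk cj = g0 (π (Pi.single j 1)) :=
      fun j => Submodule.Quotient.mk_surjective _ _
    choose c hc using hcex
    have haex : ∀ k : Fin q, ∃ ak : A, f ak = ∑ j, τ k j • c j := by
      intro k
      have h1 : (LinearMap.range f).mkQ (∑ j, τ k j • c j) = g0 (π (τ k)) := by
        rw [map_sum]
        have h2 : ∀ j, (LinearMap.range f).mkQ (τ k j • c j)
            = τ k j • g0 (π (Pi.single j 1)) := by
          intro j
          rw [map_smul, Submodule.mkQ_apply, hc j]
        rw [Finset.sum_congr rfl fun j _ => h2 j]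
        have h3 : ∀ j, τ k j • g0 (π (Pi.single j 1))
            = g0 (π (τ k j • (Pi.single j 1 : Fin n → R))) := by
          intro j
          rw [map_smul, map_smul]
        rw [Finset.sum_congr rfl fun j _ => h3 j, ← map_sum, ← map_sum]
        congr 2
        exact sum_smul_single (τ k)
      have h4 : π (τ k) = 0 := by
        have h5 : τ k ∈ LinearMap.ker π := by
          rw [← hτ]
          exact Submodule.subset_span ⟨k, rfl⟩
        exact h5
      rw [h4, map_zero] at h1
      have h6 : (∑ j, τ k j • c j) ∈ LinearMap.range f := by
        rw [← Submodule.ker_mkQ (LinearMap.range f)]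
        exact h1
      rcases h6 with ⟨ak, hak⟩
      exact ⟨ak, hak⟩
    choose aa haa using haex
    obtain ⟨bb, hbb⟩ := solv_transfer f s hsp τ aa c (fun k => (haa k).symm)
    set h0 : (Fin n → R) →ₗ[R] C :=
      { toFun := fun v => ∑ j, v j • (c j - f (bb j))
        map_add' := fun v w => by simp [add_smul, Finset.sum_add_distrib]
        map_smul' := fun r v => by simp [mul_smul, Finset.smul_sum] } with hh0
    have hh0τ : ∀ k, h0 (τ k) = 0 := by
      intro k
      show (∑ j, τ k j • (c j - f (bb j))) = 0
      simp_rw [smul_sub]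
      rw [Finset.sum_sub_distrib]
      rw [show (∑ j, τ k j • f (bb j)) = f (∑ j, τ k j • bb j) from by
        rw [map_sum]
        exact Finset.sum_congr rfl fun j _ => (map_smul f _ _).symm]
      rw [hbb k, haa k, sub_self]
    have hkerle : LinearMap.ker π ≤ LinearMap.ker h0 := by
      rw [← hτ, Submodule.span_le]
      rintro _ ⟨k, rfl⟩
      exact LinearMap.mem_ker.mpr (hh0τ k)
    set e := π.quotKerEquivOfSurjective hπsurj with he
    have hemk : ∀ v, e (Submodule.Quotient.mk v) = π v := by
      intro v
      rw [he]
      rfl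
    set hmap : G →ₗ[R] C :=
      ((LinearMap.ker π).liftQ h0 hkerle).comp e.symm.toLinearMap with hhm
    have hmπ : ∀ v, hmap (π v) = h0 v := by
      intro v
      have h6 : e.symm (π v) = Submodule.Quotient.mk v := by
        rw [LinearEquiv.symm_apply_eq, hemk]
      show ((LinearMap.ker π).liftQ h0 hkerle) (e.symm (π v)) = h0 v
      rw [h6, Submodule.liftQ_apply]
    refine ⟨hmap, ?_⟩
    refine LinearMap.ext fun gx => ?_
    obtain ⟨v, rfl⟩ := hπsurj gx
    show (LinearMap.range f).mkQ (hmap (π v)) = g0 (π v)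
    rw [hmπ v]
    have h7 : (LinearMap.range f).mkQ (h0 v) = ∑ j, v j • g0 (π (Pi.single j 1)) := by
      show (LinearMap.range f).mkQ (∑ j, v j • (c j - f (bb j))) = _
      rw [map_sum]
      refine Finset.sum_congr rfl fun j _ => ?_
      rw [map_smul]
      congr 1
      rw [map_sub, Submodule.mkQ_apply, Submodule.mkQ_apply, hc j]
      rw [show Submodule.Quotient.mk (p := LinearMap.range f) (f (bb j)) = 0 from
        (Submodule.Quotient.mk_eq_zero _).mpr ⟨bb j, rfl⟩, sub_zero]
    rw [h7]
    have h8 : ∀ j, v j • g0 (π (Pi.single j 1))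
        = g0 (π (v j • (Pi.single j 1 : Fin n → R))) := by
      intro j
      rw [map_smul, map_smul]
    rw [Finset.sum_congr rfl fun j _ => h8 j, ← map_sum, ← map_sum]
    congr 2
    exact sum_smul_single v
  exact hX A C f hpure g
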